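/- Cameron's theorem: every countably infinite strongly indivisible graph is isomorphic to the complete graph K_ω, the empty graph \overline{K}_ω, or the random graph R. -/

import Mathlib

/-- A countable graph is strongly indivisible if for every partition of its vertex set
into two pieces, the induced subgraph on at least one piece is isomorphic to the graph. -/
def StronglyIndivisible (G : SimpleGraph ℕ) : Prop :=
  ∀ X₀ X₁ : Set ℕ, Disjoint X₀ X₁ → X₀ ∪ X₁ = Set.univ →
    Nonempty (G.induce X₀ ≃g G) ∨ Nonempty (G.induce X₁ ≃g G)

/-- A graph `G` satisfies the extension axiom if for all disjoint finite sets `A`, `B` of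
vertices there is a vertex `x ∉ A ∪ B` adjacent to all of `A` and none of `B`.  The
random graph is the unique countable graph satisfying the extension axiom. -/
def ExtensionAxiom {V : Type*} (G : SimpleGraph V) : Prop :=
  ∀ A B : Finset V, Disjoint A B →
    ∃ x, x ∉ A ∧ x ∉ B ∧ (∀ a ∈ A, G.Adj x a) ∧ (∀ b ∈ B, ¬ G.Adj x b)

open SimpleGraph

/-! ### Back and forth: any two countable graphs with the extension axiom are isomorphic -/

/-- A list of pairs representing a partial isomorphism from `G` to `R`. -/
def GoodList (G R : SimpleGraph ℕ) (l : List (ℕ × ℕ)) : Prop :=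
  ∀ p ∈ l, ∀ q ∈ l, (p.1 = q.1 ↔ p.2 = q.2) ∧ (G.Adj p.1 q.1 ↔ R.Adj p.2 q.2)

lemma goodList_nil (G R : SimpleGraph ℕ) : GoodList G R [] :=
  fun p hp => absurd hp List.not_mem_nil

lemma goodList_cons {G R : SimpleGraph ℕ} {l : List (ℕ × ℕ)} {a b : ℕ}
    (hl : GoodList G R l)
    (h : ∀ q ∈ l, (a = q.1 ↔ b = q.2) ∧ (G.Adj a q.1 ↔ R.Adj b q.2)) :
    GoodList G R ((a, b) :: l) := by
  rintro p hp q hq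
  rcases List.mem_cons.1 hp with rfl | hp <;> rcases List.mem_cons.1 hq with rfl | hq
  · exact ⟨by simp, iff_of_false (G.loopless.irrefl _) (R.loopless.irrefl _)⟩
  · exact h q hq
  · exact ⟨eq_comm.trans ((h p hp).1.trans eq_comm),
      (G.adj_comm _ _).trans (((h p hp).2).trans (R.adj_comm _ _))⟩
  · exact hl p hp q hq

lemma goodList_extend_fst {G R : SimpleGraph ℕ} (hR : ExtensionAxiom R)
    {l : List (ℕ × ℕ)} (hl : GoodList G R l) (a : ℕ) :
    ∃ b, GoodList G R ((a, b) :: l) := by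
  classical
  by_cases hc : ∃ p ∈ l, p.1 = a
  · obtain ⟨p, hp, hpa⟩ := hc
    refine ⟨p.2, goodList_cons hl fun q hq => ?_⟩
    have := hl p hp q hq
    rw [hpa] at this
    exact this
  · push_neg at hc
    set A : Finset ℕ := (l.map Prod.snd).toFinset.filter
      (fun y => ∃ p ∈ l, p.2 = y ∧ G.Adj a p.1) with hA
    set B : Finset ℕ := (l.map Prod.snd).toFinset.filter
      (fun y => ∃ p ∈ l, p.2 = y ∧ ¬ G.Adj a p.1) with hB
    have hdisj : Disjoint A B := by
      rw [Finset.disjoint_left]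
      intro y hyA hyB
      obtain ⟨-, p, hp, hpy, hpadj⟩ := Finset.mem_filter.1 hyA
      obtain ⟨-, q, hq, hqy, hqadj⟩ := Finset.mem_filter.1 hyB
      have h12 : p.2 = q.2 := hpy.trans hqy.symm
      have h11 : p.1 = q.1 := (hl p hp q hq).1.mpr h12
      exact hqadj (h11 ▸ hpadj)
    obtain ⟨x, hxA, hxB, hadjA, hadjB⟩ := hR A B hdisj
    refine ⟨x, goodList_cons hl fun q hq => ?_⟩
    have hq2 : q.2 ∈ (l.map Prod.snd).toFinset :=
      List.mem_toFinset.2 (List.mem_map.2 ⟨q, hq, rfl⟩)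
    by_cases hadj : G.Adj a q.1
    · have hqA : q.2 ∈ A := Finset.mem_filter.2 ⟨hq2, q, hq, rfl, hadj⟩
      exact ⟨iff_of_false (fun hh => hc q hq hh.symm)
          (fun hh => hxA (by rw [hh]; exact hqA)),
        iff_of_true hadj (hadjA _ hqA)⟩
    · have hqB : q.2 ∈ B := Finset.mem_filter.2 ⟨hq2, q, hq, rfl, hadj⟩
      exact ⟨iff_of_false (fun hh => hc q hq hh.symm)
          (fun hh => hxB (by rw [hh]; exact hqB)),
        iff_of_false hadj (hadjB _ hqB)⟩

lemma goodList_extend_snd {G R : SimpleGraph ℕ} (hG : ExtensionAxiom G)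
    {l : List (ℕ × ℕ)} (hl : GoodList G R l) (b : ℕ) :
    ∃ a, GoodList G R ((a, b) :: l) := by
  classical
  by_cases hc : ∃ p ∈ l, p.2 = b
  · obtain ⟨p, hp, hpb⟩ := hc
    refine ⟨p.1, goodList_cons hl fun q hq => ?_⟩
    have := hl p hp q hq
    rw [hpb] at this
    exact this
  · push_neg at hc
    set A : Finset ℕ := (l.map Prod.fst).toFinset.filter
      (fun y => ∃ p ∈ l, p.1 = y ∧ R.Adj b p.2) with hA
    set B : Finset ℕ := (l.map Prod.fst).toFinset.filter
      (fun y => ∃ p ∈ l, p.1 = y ∧ ¬ R.Adj b p.2) with hB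
    have hdisj : Disjoint A B := by
      rw [Finset.disjoint_left]
      intro y hyA hyB
      obtain ⟨-, p, hp, hpy, hpadj⟩ := Finset.mem_filter.1 hyA
      obtain ⟨-, q, hq, hqy, hqadj⟩ := Finset.mem_filter.1 hyB
      have h11 : p.1 = q.1 := hpy.trans hqy.symm
      have h12 : p.2 = q.2 := (hl p hp q hq).1.mp h11
      exact hqadj (h12 ▸ hpadj)
    obtain ⟨x, hxA, hxB, hadjA, hadjB⟩ := hG A B hdisj
    refine ⟨x, goodList_cons hl fun q hq => ?_⟩
    have hq1 : q.1 ∈ (l.map Prod.fst).toFinset :=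
      List.mem_toFinset.2 (List.mem_map.2 ⟨q, hq, rfl⟩)
    by_cases hadj : R.Adj b q.2
    · have hqA : q.1 ∈ A := Finset.mem_filter.2 ⟨hq1, q, hq, rfl, hadj⟩
      exact ⟨iff_of_false (fun hh => hxA (by rw [hh]; exact hqA))
          (fun hh => hc q hq hh.symm),
        iff_of_true (hadjA _ hqA) hadj⟩
    · have hqB : q.1 ∈ B := Finset.mem_filter.2 ⟨hq1, q, hq, rfl, hadj⟩
      exact ⟨iff_of_false (fun hh => hxB (by rw [hh]; exact hqB))
          (fun hh => hc q hq hh.symm),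
        iff_of_false (hadjB _ hqB) hadj⟩

lemma bf_step {G R : SimpleGraph ℕ} (hG : ExtensionAxiom G) (hR : ExtensionAxiom R)
    {l : List (ℕ × ℕ)} (hl : GoodList G R l) (n : ℕ) :
    ∃ l', GoodList G R l' ∧ (∀ p ∈ l, p ∈ l') ∧ (∃ b, (n, b) ∈ l') ∧ ∃ a, (a, n) ∈ l' := by
  obtain ⟨b, hb⟩ := goodList_extend_fst hR hl n
  obtain ⟨a, ha⟩ := goodList_extend_snd hG hb n
  exact ⟨(a, n) :: (n, b) :: l, ha, fun p hp => by simp [hp], ⟨b, by simp⟩, ⟨a, by simp⟩⟩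

noncomputable def bfSeq (G R : SimpleGraph ℕ) (hG : ExtensionAxiom G)
    (hR : ExtensionAxiom R) : ℕ → {l : List (ℕ × ℕ) // GoodList G R l}
  | 0 => ⟨[], goodList_nil G R⟩
  | n + 1 => ⟨(bf_step hG hR (bfSeq G R hG hR n).2 n).choose,
      (bf_step hG hR (bfSeq G R hG hR n).2 n).choose_spec.1⟩

lemma bfSeq_succ_spec (G R : SimpleGraph ℕ) (hG : ExtensionAxiom G)
    (hR : ExtensionAxiom R) (n : ℕ) :
    (∀ p ∈ (bfSeq G R hG hR n).1, p ∈ (bfSeq G R hG hR (n + 1)).1) ∧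
      (∃ b, (n, b) ∈ (bfSeq G R hG hR (n + 1)).1) ∧
      ∃ a, (a, n) ∈ (bfSeq G R hG hR (n + 1)).1 := by
  have h := (bf_step hG hR (bfSeq G R hG hR n).2 n).choose_spec
  exact ⟨h.2.1, h.2.2.1, h.2.2.2⟩

lemma bfSeq_mono (G R : SimpleGraph ℕ) (hG : ExtensionAxiom G)
    (hR : ExtensionAxiom R) {p : ℕ × ℕ} {m n : ℕ} (hmn : m ≤ n)
    (hp : p ∈ (bfSeq G R hG hR m).1) : p ∈ (bfSeq G R hG hR n).1 := by
  induction n with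
  | zero => obtain rfl := Nat.le_zero.mp hmn; exact hp
  | succ n ih =>
    by_cases hm : m = n + 1
    · subst hm; exact hp
    · exact (bfSeq_succ_spec G R hG hR n).1 p (ih (by omega))

theorem iso_of_extensionAxiom {G R : SimpleGraph ℕ} (hG : ExtensionAxiom G)
    (hR : ExtensionAxiom R) : Nonempty (G ≃g R) := by
  have compat : ∀ p q : ℕ × ℕ, (∃ m, p ∈ (bfSeq G R hG hR m).1) →
      (∃ n, q ∈ (bfSeq G R hG hR n).1) →
      (p.1 = q.1 ↔ p.2 = q.2) ∧ (G.Adj p.1 q.1 ↔ R.Adj p.2 q.2) := by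
    rintro p q ⟨m, hm⟩ ⟨n, hn⟩
    exact (bfSeq G R hG hR (max m n)).2
      p (bfSeq_mono G R hG hR (le_max_left m n) hm)
      q (bfSeq_mono G R hG hR (le_max_right m n) hn)
  have total : ∀ a : ℕ, ∃ b, ∃ n, (a, b) ∈ (bfSeq G R hG hR n).1 := by
    intro a
    obtain ⟨b, hb⟩ := (bfSeq_succ_spec G R hG hR a).2.1
    exact ⟨b, a + 1, hb⟩
  choose f hf using total
  have hinj : Function.Injective f := by
    intro a a' hEq
    exact (compat (a, f a) (a', f a') (hf a) (hf a')).1.mpr hEq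
  have hsurj : Function.Surjective f := by
    intro b
    obtain ⟨a, hab⟩ := (bfSeq_succ_spec G R hG hR b).2.2
    exact ⟨a, (compat (a, f a) (a, b) (hf a) ⟨b + 1, hab⟩).1.mp rfl⟩
  exact ⟨⟨Equiv.ofBijective f ⟨hinj, hsurj⟩,
    fun {a b} => ((compat (a, f a) (b, f b) (hf a) (hf b)).2).symm⟩⟩

/-! ### Strongly indivisible graphs have no isolated and no universal vertices -/

lemma no_isolated {G : SimpleGraph ℕ} (h : StronglyIndivisible G)
    (hbot : ¬ Nonempty (G ≃g (⊥ : SimpleGraph ℕ))) (a : ℕ) : ∃ x, G.Adj x a := by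
  by_contra hiso
  push_neg at hiso
  set I : Set ℕ := {v | ∀ x, ¬ G.Adj x v} with hIdef
  rcases h I Iᶜ disjoint_compl_right (Set.union_compl_self I) with he | he <;> obtain ⟨e⟩ := he
  · apply hbot
    have hGbot : G = ⊥ := by
      ext u v
      simp only [bot_adj, iff_false]
      intro huv
      have h1 : (G.induce I).Adj (e.symm u) (e.symm v) := e.symm.map_adj_iff.mpr huv
      have h2 : G.Adj ↑(e.symm u) ↑(e.symm v) := h1
      exact (e.symm v).2 _ h2
    rw [hGbot]
    exact ⟨⟨Equiv.refl ℕ, by simp⟩⟩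
  · have hv : (↑(e.symm a) : ℕ) ∈ I := by
      intro x hx
      by_cases hxI : x ∈ I
      · exact hxI _ hx.symm
      · have hx' : (G.induce Iᶜ).Adj ⟨x, hxI⟩ (e.symm a) := hx
        have := e.map_adj_iff.mpr hx'
        rw [e.apply_symm_apply] at this
        exact hiso _ this
    exact (e.symm a).2 hv

lemma no_universal {G : SimpleGraph ℕ} (h : StronglyIndivisible G)
    (htop : ¬ Nonempty (G ≃g (⊤ : SimpleGraph ℕ))) (b : ℕ) :
    ∃ x, x ≠ b ∧ ¬ G.Adj x b := by
  by_contra huni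
  push_neg at huni
  set J : Set ℕ := {v | ∀ x, x ≠ v → G.Adj x v} with hJdef
  rcases h J Jᶜ disjoint_compl_right (Set.union_compl_self J) with he | he <;> obtain ⟨e⟩ := he
  · apply htop
    have hGtop : G = ⊤ := by
      ext u v
      simp only [top_adj]
      constructor
      · exact fun hh => hh.ne
      · intro huv
        have hne : (↑(e.symm u) : ℕ) ≠ ↑(e.symm v) :=
          fun hh => huv (by simpa using e.symm.toEquiv.injective (Subtype.ext hh))
        have h1 : G.Adj ↑(e.symm u) ↑(e.symm v) := (e.symm v).2 _ hne
        have h2 : (G.induce J).Adj (e.symm u) (e.symm v) := h1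
        exact e.symm.map_adj_iff.mp h2
    rw [hGtop]
    exact ⟨⟨Equiv.refl ℕ, by simp⟩⟩
  · have hv : (↑(e.symm b) : ℕ) ∈ J := by
      intro x hx
      by_cases hxJ : x ∈ J
      · exact ((hxJ ↑(e.symm b)) (fun hh => hx hh.symm)).symm
      · have hne : e ⟨x, hxJ⟩ ≠ b := by
          intro hh
          apply hx
          rw [← hh, e.symm_apply_apply]
        have hadj : G.Adj (e ⟨x, hxJ⟩) b := huni _ hne
        have hadj' : G.Adj (e ⟨x, hxJ⟩) (e (e.symm b)) := by
          rwa [e.apply_symm_apply]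
        have : (G.induce Jᶜ).Adj ⟨x, hxJ⟩ (e.symm b) := e.map_adj_iff.mp hadj'
        exact this
    exact (e.symm b).2 hv

/-! ### Strongly indivisible graphs satisfy the extension axiom -/

lemma ea_of_stronglyIndivisible {G : SimpleGraph ℕ} (h : StronglyIndivisible G)
    (htop : ¬ Nonempty (G ≃g (⊤ : SimpleGraph ℕ)))
    (hbot : ¬ Nonempty (G ≃g (⊥ : SimpleGraph ℕ))) : ExtensionAxiom G := by
  classical
  suffices H : ∀ n (A B : Finset ℕ), Disjoint A B → A.card + B.card ≤ n →
      ∃ x, x ∉ A ∧ x ∉ B ∧ (∀ a ∈ A, G.Adj x a) ∧ (∀ b ∈ B, ¬ G.Adj x b) from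
    fun A B hd => H (A.card + B.card) A B hd le_rfl
  intro n
  induction n with
  | zero =>
    intro A B hd hcard
    have hA : A = ∅ := Finset.card_eq_zero.mp (by omega)
    have hB : B = ∅ := Finset.card_eq_zero.mp (by omega)
    subst hA; subst hB
    exact ⟨0, by simp, by simp, by simp, by simp⟩
  | succ n ih =>
    intro A B hd hcard
    by_contra hno
    rcases A.eq_empty_or_nonempty with rfl | ⟨a, ha⟩
    · rcases B.eq_empty_or_nonempty with rfl | ⟨b, hb⟩
      · exact hno ⟨0, by simp, by simp, by simp, by simp⟩
      · -- A = ∅, b ∈ B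
        set B' := B.erase b with hB'def
        set S : Set ℕ := {x | x ∉ B' ∧ ∀ c ∈ B', ¬ G.Adj x c} with hSdef
        have hSadj : ∀ s ∈ S, s ≠ b → G.Adj s b := by
          intro s hs hsb
          by_contra hnadj
          refine hno ⟨s, by simp, ?_, by simp, ?_⟩
          · intro hsB
            exact hs.1 (Finset.mem_erase.2 ⟨hsb, hsB⟩)
          · intro c hc
            by_cases hcb : c = b
            · subst hcb; exact hnadj
            · exact hs.2 c (Finset.mem_erase.2 ⟨hcb, hc⟩)
        rcases h (S ∪ {b}) (S ∪ {b})ᶜ disjoint_compl_right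
            (Set.union_compl_self _) with he | he <;> obtain ⟨e⟩ := he
        · -- e : induce (S ∪ {b}) ≃g G; then e ⟨b⟩ is universal in G
          have hbmem : (b : ℕ) ∈ S ∪ {b} := Set.mem_union_right _ rfl
          obtain ⟨x, hxne, hxnadj⟩ := no_universal h htop (e ⟨b, hbmem⟩)
          obtain ⟨u, rfl⟩ := e.toEquiv.surjective x
          rw [RelIso.coe_fn_toEquiv] at hxne hxnadj
          have hub : (↑u : ℕ) ≠ b := by
            intro hh
            exact hxne (by rw [show u = ⟨b, hbmem⟩ from Subtype.ext hh])
          have huS : (↑u : ℕ) ∈ S := u.2.resolve_right (by simpa using hub)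
          have hadj : G.Adj ↑u b := hSadj _ huS hub
          have : (G.induce (S ∪ {b})).Adj u ⟨b, hbmem⟩ := hadj
          exact hxnadj (e.map_adj_iff.mpr this)
        · -- the complement contains B', use induction there
          set X := (S ∪ {b})ᶜ with hXdef
          have hBX : ∀ c ∈ B', c ∈ X := by
            intro c hc
            simp only [hXdef, Set.mem_compl_iff, Set.mem_union, Set.mem_singleton_iff]
            rintro (hcS | rfl)
            · exact hcS.1 hc
            · exact (Finset.mem_erase.1 hc).1 rfl
          set f : ℕ → ℕ := fun c => if hc : c ∈ X then e ⟨c, hc⟩ else 0 with hfdef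
          set Bs : Finset ℕ := B'.image f with hBsdef
          have hcards : (∅ : Finset ℕ).card + Bs.card ≤ n := by
            have h1 : Bs.card ≤ B'.card := Finset.card_image_le
            have h2 : B'.card = B.card - 1 := Finset.card_erase_of_mem hb
            have h3 : 1 ≤ B.card := Finset.card_pos.2 ⟨b, hb⟩
            simp only [Finset.card_empty]
            omega
          obtain ⟨w, hw1, hw2, hw3, hw4⟩ := ih ∅ Bs (Finset.disjoint_empty_left _) hcards
          set u := e.symm w with hudef
          have hfu : f ↑u = w := by
            rw [hfdef]
            simp only [u.2, dif_pos]
            rw [show (⟨↑u, u.2⟩ : ↥X) = u from Subtype.ext rfl, hudef, e.apply_symm_apply]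
          have huS : (↑u : ℕ) ∈ S := by
            constructor
            · intro hmem
              exact hw2 (by rw [← hfu]; exact Finset.mem_image_of_mem f hmem)
            · intro c hc hadj
              have hcX : c ∈ X := hBX c hc
              have h1 : (G.induce X).Adj u ⟨c, hcX⟩ := hadj
              have h2 : G.Adj (e u) (e ⟨c, hcX⟩) := e.map_adj_iff.mpr h1
              rw [hudef, e.apply_symm_apply] at h2
              have hfc : f c = e ⟨c, hcX⟩ := by rw [hfdef]; simp only [hcX, dif_pos]
              exact hw4 (f c) (Finset.mem_image_of_mem f hc) (by rwa [hfc])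
          exact u.2 (Set.mem_union_left _ huS)
    · -- a ∈ A
      set A' := A.erase a with hA'def
      set S : Set ℕ := {x | x ∉ A' ∧ x ∉ B ∧ (∀ c ∈ A', G.Adj x c) ∧
        ∀ c ∈ B, ¬ G.Adj x c} with hSdef
      have hSnadj : ∀ s ∈ S, s ≠ a → ¬ G.Adj s a := by
        intro s hs hsa hadj
        refine hno ⟨s, ?_, hs.2.1, ?_, hs.2.2.2⟩
        · intro hsA
          exact hs.1 (Finset.mem_erase.2 ⟨hsa, hsA⟩)
        · intro c hc
          by_cases hca : c = a
          · subst hca; exact hadj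
          · exact hs.2.2.1 c (Finset.mem_erase.2 ⟨hca, hc⟩)
      rcases h (S ∪ {a}) (S ∪ {a})ᶜ disjoint_compl_right
          (Set.union_compl_self _) with he | he <;> obtain ⟨e⟩ := he
      · -- e ⟨a⟩ would be isolated in G
        have hamem : (a : ℕ) ∈ S ∪ {a} := Set.mem_union_right _ rfl
        obtain ⟨x, hxadj⟩ := no_isolated h hbot (e ⟨a, hamem⟩)
        obtain ⟨u, rfl⟩ := e.toEquiv.surjective x
        rw [RelIso.coe_fn_toEquiv] at hxadj
        have h1 : (G.induce (S ∪ {a})).Adj u ⟨a, hamem⟩ := e.map_adj_iff.mp hxadj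
        have h2 : G.Adj ↑u a := h1
        have hua : (↑u : ℕ) ≠ a := h2.ne
        have huS : (↑u : ℕ) ∈ S := u.2.resolve_right (by simpa using hua)
        exact hSnadj _ huS hua h2
      · set X := (S ∪ {a})ᶜ with hXdef
        have hAX : ∀ c ∈ A', c ∈ X := by
          intro c hc
          simp only [hXdef, Set.mem_compl_iff, Set.mem_union, Set.mem_singleton_iff]
          rintro (hcS | rfl)
          · exact hcS.1 hc
          · exact (Finset.mem_erase.1 hc).1 rfl
        have hBXm : ∀ c ∈ B, c ∈ X := by
          intro c hc
          simp only [hXdef, Set.mem_compl_iff, Set.mem_union, Set.mem_singleton_iff]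
          rintro (hcS | rfl)
          · exact hcS.2.1 hc
          · exact Finset.disjoint_left.1 hd ha hc
        set f : ℕ → ℕ := fun c => if hc : c ∈ X then e ⟨c, hc⟩ else 0 with hfdef
        have hfX : ∀ c (hc : c ∈ X), f c = e ⟨c, hc⟩ := by
          intro c hc; rw [hfdef]; simp only [hc, dif_pos]
        set As : Finset ℕ := A'.image f with hAsdef
        set Bs : Finset ℕ := B.image f with hBsdef
        have hdisjs : Disjoint As Bs := by
          rw [Finset.disjoint_left]
          rintro y hyA hyB
          obtain ⟨c, hc, rfl⟩ := Finset.mem_image.1 hyA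
          obtain ⟨d, hd', hfd⟩ := Finset.mem_image.1 hyB
          have hcX := hAX c hc
          have hdX := hBXm d hd'
          rw [hfX c hcX, hfX d hdX] at hfd
          have : d = c := by
            have := e.toEquiv.injective hfd
            simpa using congrArg Subtype.val this
          subst this
          exact Finset.disjoint_left.1 hd (Finset.mem_of_mem_erase hc) hd'
        have hcards : As.card + Bs.card ≤ n := by
          have h1 : As.card ≤ A'.card := Finset.card_image_le
          have h2 : Bs.card ≤ B.card := Finset.card_image_le
          have h3 : A'.card = A.card - 1 := Finset.card_erase_of_mem ha
          have h4 : 1 ≤ A.card := Finset.card_pos.2 ⟨a, ha⟩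
          omega
        obtain ⟨w, hw1, hw2, hw3, hw4⟩ := ih As Bs hdisjs hcards
        set u := e.symm w with hudef
        have hfu : f ↑u = w := by
          rw [hfX ↑u u.2]
          rw [show (⟨↑u, u.2⟩ : ↥X) = u from Subtype.ext rfl, hudef, e.apply_symm_apply]
        have huS : (↑u : ℕ) ∈ S := by
          refine ⟨?_, ?_, ?_, ?_⟩
          · intro hmem
            exact hw1 (by rw [← hfu]; exact Finset.mem_image_of_mem f hmem)
          · intro hmem
            exact hw2 (by rw [← hfu]; exact Finset.mem_image_of_mem f hmem)
          · intro c hc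
            have hcX := hAX c hc
            have h1 : G.Adj w (f c) := hw3 (f c) (Finset.mem_image_of_mem f hc)
            rw [hfX c hcX] at h1
            have h2 : G.Adj (e u) (e ⟨c, hcX⟩) := by rwa [hudef, e.apply_symm_apply]
            exact e.map_adj_iff.mp h2
          · intro c hc hadj
            have hcX := hBXm c hc
            have h1 : (G.induce X).Adj u ⟨c, hcX⟩ := hadj
            have h2 : G.Adj (e u) (e ⟨c, hcX⟩) := e.map_adj_iff.mpr h1
            rw [hudef, e.apply_symm_apply] at h2
            exact hw4 (f c) (Finset.mem_image_of_mem f hc) (by rwa [hfX c hcX])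
        exact u.2 (Set.mem_union_left _ huS)

/-- **Cameron's theorem.** Every countably infinite strongly indivisible
graph is isomorphic to the complete graph `K_ω`, the empty graph `\overline{K}_ω`, or the
random graph (i.e. to any countable graph satisfying the extension axiom). -/
theorem cameron (G : SimpleGraph ℕ) (h : StronglyIndivisible G) :
    Nonempty (G ≃g (⊤ : SimpleGraph ℕ)) ∨
    Nonempty (G ≃g (⊥ : SimpleGraph ℕ)) ∨
    (∀ R : SimpleGraph ℕ, ExtensionAxiom R → Nonempty (G ≃g R)) := by
  by_cases htop : Nonempty (G ≃g (⊤ : SimpleGraph ℕ))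
  · exact Or.inl htop
  by_cases hbot : Nonempty (G ≃g (⊥ : SimpleGraph ℕ))
  · exact Or.inr (Or.inl hbot)
  exact Or.inr (Or.inr fun R hR =>
    iso_of_extensionAxiom (ea_of_stronglyIndivisible h htop hbot) hR)
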